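/- Two elements α, β of IEnd(P_n) are H-related in IEnd(P_n) if and only if Dom α = Dom β, Im α = Im β, and both α⁻¹β and αβ⁻¹ are partial automorphisms of P_n. -/

import Mathlib

open scoped Classical

/-- `adj u v` means `|u - v| = 1`, i.e. `u` and `v` are adjacent in the path. -/
def adj (u v : ℕ) : Prop := u + 1 = v ∨ v + 1 = u

/-- `f` is an injective partial endomorphism of the path `P_n` on `{1,…,n}`. -/
structure IsIEnd (n : ℕ) (f : ℕ →. ℕ) : Prop where
  dom_subset : f.Dom ⊆ Set.Icc 1 n
  ran_subset : f.ran ⊆ Set.Icc 1 n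
  inj : ∀ ⦃x y a : ℕ⦄, a ∈ f x → a ∈ f y → x = y
  edge : ∀ ⦃u v a b : ℕ⦄, a ∈ f u → b ∈ f v → adj u v → adj a b

/-- `f` is a partial automorphism of the path `P_n`. -/
def IsPAut (n : ℕ) (f : ℕ →. ℕ) : Prop :=
  IsIEnd n f ∧ ∀ ⦃u v a b : ℕ⦄, a ∈ f u → b ∈ f v → adj a b → adj u v

/-- Left-to-right composition of partial maps: `x (pcomp f g) = (x f) g`. -/
def pcomp (f g : ℕ →. ℕ) : ℕ →. ℕ := PFun.comp g f

/-- The inverse of an injective partial map. -/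
noncomputable def pinv (f : ℕ →. ℕ) : ℕ →. ℕ :=
  fun y => ⟨∃ x, y ∈ f x, fun h => h.choose⟩

/-- `I` is an interval of `X`: a set of consecutive integers contained in `X`. -/
def IsIntervalOf (I X : Set ℕ) : Prop :=
  I ⊆ X ∧ ∀ ⦃x⦄, x ∈ I → ∀ ⦃y⦄, y ∈ I → ∀ ⦃z : ℕ⦄, x < z → z < y → z ∈ I

/-- `I` is a maximal interval of `X`. -/
def IsMaxIntervalOf (I X : Set ℕ) : Prop :=
  IsIntervalOf I X ∧ ∀ J, IsIntervalOf J X → I ⊆ J → I = J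

lemma mem_pcomp {f g : ℕ →. ℕ} {x a : ℕ} :
    a ∈ pcomp f g x ↔ ∃ y, y ∈ f x ∧ a ∈ g y := by
  simp only [pcomp, PFun.comp_apply, Part.mem_bind_iff]
  exact Part.mem_bind_iff

lemma mem_ran' {f : ℕ →. ℕ} {a : ℕ} : a ∈ f.ran ↔ ∃ x, a ∈ f x := Iff.rfl

lemma mem_pinv {f : ℕ →. ℕ} (hf : ∀ ⦃x y a : ℕ⦄, a ∈ f x → a ∈ f y → x = y)
    {x a : ℕ} : a ∈ pinv f x ↔ x ∈ f a := by
  constructor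
  · rintro ⟨h, rfl⟩
    exact h.choose_spec
  · intro hx
    have h : ∃ u, x ∈ f u := ⟨a, hx⟩
    exact ⟨h, hf h.choose_spec hx⟩

/-- If `f` is a partial automorphism and `g` is its "swap" (relational converse),
then `g` is an injective partial endomorphism. -/
lemma swap_IEnd {n : ℕ} {f g : ℕ →. ℕ} (hf : IsPAut n f)
    (hg : ∀ x a : ℕ, a ∈ g x ↔ x ∈ f a) : IsIEnd n g := by
  constructor
  · intro x hx
    obtain ⟨a, ha⟩ := (PFun.mem_dom g x).1 hx
    exact hf.1.ran_subset ⟨a, (hg x a).1 ha⟩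
  · rintro a ⟨x, hx⟩
    exact hf.1.dom_subset ((PFun.mem_dom f a).2 ⟨x, (hg x a).1 hx⟩)
  · intro x y a hx hy
    exact Part.mem_unique ((hg x a).1 hx) ((hg y a).1 hy)
  · intro u v a b ha hb huv
    exact hf.2 ((hg u a).1 ha) ((hg v b).1 hb) huv

theorem stmt9 (n : ℕ) (α β : ℕ →. ℕ) (hα : IsIEnd n α) (hβ : IsIEnd n β) :
    ((∃ γ δ : ℕ →. ℕ, IsIEnd n γ ∧ IsIEnd n δ ∧ α = pcomp γ β ∧ β = pcomp δ α) ∧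
     (∃ γ δ : ℕ →. ℕ, IsIEnd n γ ∧ IsIEnd n δ ∧ β = pcomp α γ ∧ α = pcomp β δ)) ↔
    (α.Dom = β.Dom ∧ α.ran = β.ran ∧
      IsPAut n (pcomp (pinv α) β) ∧ IsPAut n (pcomp α (pinv β))) := by
  have memAB : ∀ x a : ℕ, a ∈ pcomp (pinv α) β x ↔ ∃ z, x ∈ α z ∧ a ∈ β z := by
    intro x a
    rw [mem_pcomp]
    constructor
    · rintro ⟨y, hy, ha⟩
      exact ⟨y, (mem_pinv hα.inj).1 hy, ha⟩
    · rintro ⟨z, hz, ha⟩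
      exact ⟨z, (mem_pinv hα.inj).2 hz, ha⟩
  have memBA : ∀ x a : ℕ, a ∈ pcomp α (pinv β) x ↔ ∃ z, z ∈ α x ∧ z ∈ β a := by
    intro x a
    rw [mem_pcomp]
    constructor
    · rintro ⟨y, hy, ha⟩
      exact ⟨y, hy, (mem_pinv hβ.inj).1 ha⟩
    · rintro ⟨z, hz, ha⟩
      exact ⟨z, hz, (mem_pinv hβ.inj).2 ha⟩
  constructor
  · rintro ⟨⟨γ, δ, hγ, hδ, hL1, hL2⟩, ⟨γ', δ', hγ', hδ', hR1, hR2⟩⟩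
    have hdom : α.Dom = β.Dom := by
      ext x
      simp only [PFun.mem_dom]
      constructor
      · rintro ⟨a, ha⟩
        rw [hR2, mem_pcomp] at ha
        obtain ⟨y, hy, -⟩ := ha
        exact ⟨y, hy⟩
      · rintro ⟨a, ha⟩
        rw [hR1, mem_pcomp] at ha
        obtain ⟨y, hy, -⟩ := ha
        exact ⟨y, hy⟩
    have hran : α.ran = β.ran := by
      ext a
      simp only [mem_ran']
      constructor
      · rintro ⟨x, hx⟩
        rw [hL1, mem_pcomp] at hx
        obtain ⟨y, -, hy⟩ := hx
        exact ⟨y, hy⟩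
      · rintro ⟨x, hx⟩
        rw [hL2, mem_pcomp] at hx
        obtain ⟨y, -, hy⟩ := hx
        exact ⟨y, hy⟩
    refine ⟨hdom, hran, ⟨⟨?_, ?_, ?_, ?_⟩, ?_⟩, ⟨⟨?_, ?_, ?_, ?_⟩, ?_⟩⟩
    · -- dom_subset of pinv α ∘ β
      intro x hx
      obtain ⟨a, ha⟩ := (PFun.mem_dom _ x).1 hx
      obtain ⟨z, hz, -⟩ := (memAB x a).1 ha
      exact hα.ran_subset ⟨z, hz⟩
    · rintro a ⟨x, hx⟩
      obtain ⟨z, -, hz⟩ := (memAB x a).1 hx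
      exact hβ.ran_subset ⟨z, hz⟩
    · intro x y a hx hy
      obtain ⟨z, hz1, hz2⟩ := (memAB x a).1 hx
      obtain ⟨w, hw1, hw2⟩ := (memAB y a).1 hy
      have : z = w := hβ.inj hz2 hw2
      subst this
      exact Part.mem_unique hz1 hw1
    · intro u v a b ha hb huv
      obtain ⟨z, hz1, hz2⟩ := (memAB u a).1 ha
      obtain ⟨w, hw1, hw2⟩ := (memAB v b).1 hb
      rw [hR1, mem_pcomp] at hz2 hw2
      obtain ⟨y1, hy1, ha'⟩ := hz2
      obtain ⟨y2, hy2, hb'⟩ := hw2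
      have e1 : y1 = u := Part.mem_unique hy1 hz1
      have e2 : y2 = v := Part.mem_unique hy2 hw1
      subst e1; subst e2
      exact hγ'.edge ha' hb' huv
    · intro u v a b ha hb hab
      obtain ⟨z, hz1, hz2⟩ := (memAB u a).1 ha
      obtain ⟨w, hw1, hw2⟩ := (memAB v b).1 hb
      rw [hR2, mem_pcomp] at hz1 hw1
      obtain ⟨y1, hy1, hu'⟩ := hz1
      obtain ⟨y2, hy2, hv'⟩ := hw1
      have e1 : y1 = a := Part.mem_unique hy1 hz2
      have e2 : y2 = b := Part.mem_unique hy2 hw2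
      subst e1; subst e2
      exact hδ'.edge hu' hv' hab
    · -- dom_subset of pinv β ∘ α (i.e. pcomp α (pinv β))
      intro x hx
      obtain ⟨a, ha⟩ := (PFun.mem_dom _ x).1 hx
      obtain ⟨z, hz, -⟩ := (memBA x a).1 ha
      exact hα.dom_subset ((PFun.mem_dom α x).2 ⟨z, hz⟩)
    · rintro a ⟨x, hx⟩
      obtain ⟨z, -, hz⟩ := (memBA x a).1 hx
      exact hβ.dom_subset ((PFun.mem_dom β a).2 ⟨z, hz⟩)
    · intro x y a hx hy
      obtain ⟨z, hz1, hz2⟩ := (memBA x a).1 hx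
      obtain ⟨w, hw1, hw2⟩ := (memBA y a).1 hy
      have : z = w := Part.mem_unique hz2 hw2
      subst this
      exact hα.inj hz1 hw1
    · intro u v a b ha hb huv
      obtain ⟨z, hz1, hz2⟩ := (memBA u a).1 ha
      obtain ⟨w, hw1, hw2⟩ := (memBA v b).1 hb
      rw [hL1, mem_pcomp] at hz1 hw1
      obtain ⟨y1, hy1, ha'⟩ := hz1
      obtain ⟨y2, hy2, hb'⟩ := hw1
      have e1 : y1 = a := hβ.inj ha' hz2
      have e2 : y2 = b := hβ.inj hb' hw2
      subst e1; subst e2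
      exact hγ.edge hy1 hy2 huv
    · intro u v a b ha hb hab
      obtain ⟨z, hz1, hz2⟩ := (memBA u a).1 ha
      obtain ⟨w, hw1, hw2⟩ := (memBA v b).1 hb
      rw [hL2, mem_pcomp] at hz2 hw2
      obtain ⟨y1, hy1, hu'⟩ := hz2
      obtain ⟨y2, hy2, hv'⟩ := hw2
      have e1 : y1 = u := hα.inj hu' hz1
      have e2 : y2 = v := hα.inj hv' hw1
      subst e1; subst e2
      exact hδ.edge hy1 hy2 hab
  · rintro ⟨hd, hr, h1, h2⟩
    constructor
    · -- L part: γ = pcomp α (pinv β), δ = pcomp β (pinv α)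
      refine ⟨pcomp α (pinv β), pcomp β (pinv α), h2.1, ?_, ?_, ?_⟩
      · -- swap of pcomp α (pinv β)
        refine swap_IEnd h2 ?_
        intro s t
        rw [mem_pcomp, memBA]
        constructor
        · rintro ⟨z, hz, ha⟩
          exact ⟨z, (mem_pinv hα.inj).1 ha, hz⟩
        · rintro ⟨z, hz, ha⟩
          exact ⟨z, ha, (mem_pinv hα.inj).2 hz⟩
      · apply PFun.ext
        intro x a
        rw [mem_pcomp]
        constructor
        · intro ha
          have : a ∈ β.ran := hr ▸ (⟨x, ha⟩ : a ∈ α.ran)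
          obtain ⟨y, hy⟩ := this
          exact ⟨y, (memBA x y).2 ⟨a, ha, hy⟩, hy⟩
        · rintro ⟨y, hy, ha⟩
          obtain ⟨z, hz1, hz2⟩ := (memBA x y).1 hy
          have : z = a := Part.mem_unique hz2 ha
          subst this
          exact hz1
      · apply PFun.ext
        intro x a
        rw [mem_pcomp]
        constructor
        · intro ha
          have : a ∈ α.ran := hr.symm ▸ (⟨x, ha⟩ : a ∈ β.ran)
          obtain ⟨y, hy⟩ := this
          exact ⟨y, mem_pcomp.2 ⟨a, ha, (mem_pinv hα.inj).2 hy⟩, hy⟩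
        · rintro ⟨y, hy, ha⟩
          obtain ⟨z, hz1, hz2⟩ := (mem_pcomp.1 hy)
          have hz2' : z ∈ α y := (mem_pinv hα.inj).1 hz2
          have : z = a := Part.mem_unique hz2' ha
          subst this
          exact hz1
    · -- R part: γ = pcomp (pinv α) β, δ = pcomp (pinv β) α
      refine ⟨pcomp (pinv α) β, pcomp (pinv β) α, h1.1, ?_, ?_, ?_⟩
      · refine swap_IEnd h1 ?_
        intro s t
        rw [mem_pcomp, memAB]
        constructor
        · rintro ⟨z, hz, ha⟩
          exact ⟨z, ha, (mem_pinv hβ.inj).1 hz⟩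
        · rintro ⟨z, hz, ha⟩
          exact ⟨z, (mem_pinv hβ.inj).2 ha, hz⟩
      · apply PFun.ext
        intro x a
        rw [mem_pcomp]
        constructor
        · intro ha
          have : x ∈ α.Dom := hd ▸ ((PFun.mem_dom β x).2 ⟨a, ha⟩)
          obtain ⟨y, hy⟩ := (PFun.mem_dom α x).1 this
          exact ⟨y, hy, (memAB y a).2 ⟨x, hy, ha⟩⟩
        · rintro ⟨y, hy, ha⟩
          obtain ⟨z, hz1, hz2⟩ := (memAB y a).1 ha
          have : z = x := hα.inj hz1 hy
          subst this
          exact hz2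
      · apply PFun.ext
        intro x a
        rw [mem_pcomp]
        constructor
        · intro ha
          have : x ∈ β.Dom := hd.symm ▸ ((PFun.mem_dom α x).2 ⟨a, ha⟩)
          obtain ⟨y, hy⟩ := (PFun.mem_dom β x).1 this
          exact ⟨y, hy, mem_pcomp.2 ⟨x, (mem_pinv hβ.inj).2 hy, ha⟩⟩
        · rintro ⟨y, hy, ha⟩
          obtain ⟨z, hz1, hz2⟩ := mem_pcomp.1 ha
          have hz1' : y ∈ β z := (mem_pinv hβ.inj).1 hz1
          have : z = x := hβ.inj hz1' hy
          subst this
          exact hz2
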